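/- (Discrete ABP-type maximum principle.) Let E ⊂ ℤ^d be finite, let L_a be a balanced, uniformly elliptic (constant κ), nearest-neighbor probability difference operator on ℤ^d, and let u be a function on Ē with L_a u(x) ≥ −g(x) for all x ∈ E with I_u(x) ≠ ∅, where g ≥ 0. Then max_E u ≤ (2/κ)·diam(Ē)·(∑_{x∈E, I_u(x)≠∅} g(x)^d)^{1/d} + max_{∂E} u, where diam is the ℓ^∞-diameter. -/

import Mathlib

open scoped Classical

/-- The `i`-th unit vector in `ℤ^d`. -/
def unitv (d : ℕ) (i : Fin d) : Fin d → ℤ := fun j => if j = i then 1 else 0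

/-- Nearest neighbors in `ℤ^d` (i.e. `|x - y| = 1`). -/
def isNbr {d : ℕ} (x y : Fin d → ℤ) : Prop := (∑ j, (x j - y j).natAbs) = 1

/-- The outer lattice boundary `∂E` of a set `E ⊆ ℤ^d`. -/
def bdry {d : ℕ} (E : Set (Fin d → ℤ)) : Set (Fin d → ℤ) :=
  {y | y ∉ E ∧ ∃ x ∈ E, isNbr x y}

/-- The difference operator `L_a u (x) = ∑_y a(x,y)(u(y) - u(x))`. -/
noncomputable def La {d : ℕ} (a : (Fin d → ℤ) → (Fin d → ℤ) → ℝ)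
    (u : (Fin d → ℤ) → ℝ) (x : Fin d → ℤ) : ℝ :=
  ∑ i : Fin d,
    (a x (x + unitv d i) * (u (x + unitv d i) - u x) +
     a x (x - unitv d i) * (u (x - unitv d i) - u x))

/-- The upper contact set `I_u(x)`. -/
def contact {d : ℕ} (clE : Set (Fin d → ℤ)) (u : (Fin d → ℤ) → ℝ)
    (x : Fin d → ℤ) : Set (Fin d → ℝ) :=
  {s | ∀ z ∈ clE, u z - ∑ j, s j * (z j : ℝ) ≤ u x - ∑ j, s j * (x j : ℝ)}

/-- The `ℓ^∞`-diameter of a finite subset of `ℤ^d`. -/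
def ellInfDiam {d : ℕ} (F : Finset (Fin d → ℤ)) : ℕ :=
  (F ×ˢ F).sup fun p => Finset.univ.sup fun j => (p.1 j - p.2 j).natAbs

lemma nbr_add {d : ℕ} (x : Fin d → ℤ) (i : Fin d) : isNbr x (x + unitv d i) := by
  unfold isNbr
  have h : ∀ j ∈ Finset.univ, (x j - (x + unitv d i) j).natAbs = if j = i then 1 else 0 := by
    intro j _
    simp only [Pi.add_apply, unitv]
    split <;> omega
  rw [Finset.sum_congr rfl h, Finset.sum_ite_eq' Finset.univ i fun _ => 1]
  simp

lemma nbr_sub {d : ℕ} (x : Fin d → ℤ) (i : Fin d) : isNbr x (x - unitv d i) := by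
  unfold isNbr
  have h : ∀ j ∈ Finset.univ, (x j - (x - unitv d i) j).natAbs = if j = i then 1 else 0 := by
    intro j _
    simp only [Pi.sub_apply, unitv]
    split <;> omega
  rw [Finset.sum_congr rfl h, Finset.sum_ite_eq' Finset.univ i fun _ => 1]
  simp

lemma sum_slope_add {d : ℕ} (s : Fin d → ℝ) (y : Fin d → ℤ) (i : Fin d) :
    ∑ j, s j * (((y + unitv d i) j : ℤ) : ℝ) = (∑ j, s j * ((y j : ℤ) : ℝ)) + s i := by
  have h : ∀ j ∈ Finset.univ, s j * (((y + unitv d i) j : ℤ) : ℝ)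
      = s j * ((y j : ℤ) : ℝ) + (if j = i then s j else 0) := by
    intro j _
    simp only [Pi.add_apply, unitv]
    split <;> push_cast <;> ring
  rw [Finset.sum_congr rfl h, Finset.sum_add_distrib,
    Finset.sum_ite_eq' Finset.univ i fun j => s j]
  simp

lemma sum_slope_sub {d : ℕ} (s : Fin d → ℝ) (y : Fin d → ℤ) (i : Fin d) :
    ∑ j, s j * (((y - unitv d i) j : ℤ) : ℝ) = (∑ j, s j * ((y j : ℤ) : ℝ)) - s i := by
  have h : ∀ j ∈ Finset.univ, s j * (((y - unitv d i) j : ℤ) : ℝ)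
      = s j * ((y j : ℤ) : ℝ) - (if j = i then s j else 0) := by
    intro j _
    simp only [Pi.sub_apply, unitv]
    split <;> push_cast <;> ring
  rw [Finset.sum_congr rfl h, Finset.sum_sub_distrib,
    Finset.sum_ite_eq' Finset.univ i fun j => s j]
  simp

lemma prod_le_avg_pow {d : ℕ} (hd : 1 ≤ d) (f : Fin d → ℝ) (hf : ∀ i, 0 ≤ f i) :
    ∏ i, f i ≤ ((∑ i, f i) / d) ^ d := by
  have hd0 : (d : ℝ) ≠ 0 := Nat.cast_ne_zero.mpr (by omega)
  have h := Real.geom_mean_le_arith_mean_weighted Finset.univ (fun _ => 1 / (d : ℝ)) f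
    (fun i _ => by positivity) (by simp [Finset.sum_const, Finset.card_univ]; field_simp)
    (fun i _ => hf i)
  have hL : (∏ i, f i ^ ((1:ℝ) / d)) = (∏ i, f i) ^ ((1:ℝ) / d) :=
    Real.finset_prod_rpow Finset.univ f (fun i _ => hf i) _
  have hR : ∑ i : Fin d, 1 / (d:ℝ) * f i = (∑ i, f i) / d := by
    rw [← Finset.mul_sum]; ring
  rw [hL, hR] at h
  have hprod0 : (0:ℝ) ≤ ∏ i, f i := Finset.prod_nonneg fun i _ => hf i
  have h2 := pow_le_pow_left₀ (Real.rpow_nonneg hprod0 _) h d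
  rwa [← Real.rpow_natCast ((∏ i, f i) ^ ((1:ℝ)/d)) d, ← Real.rpow_mul hprod0,
    one_div_mul_cancel hd0, Real.rpow_one] at h2

set_option maxHeartbeats 2000000 in
/-- Discrete ABP-type maximum principle: if `L_a u ≥ -g` on the contact points of `E`, then
`max_E u ≤ (2/κ) diam(Ē) (∑_{x ∈ E, I_u(x) ≠ ∅} g(x)^d)^{1/d} + max_{∂E} u`. -/
theorem stmt15 {d : ℕ} (hd : 1 ≤ d) (κ : ℝ) (hκ : 0 < κ)
    (a : (Fin d → ℤ) → (Fin d → ℤ) → ℝ)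
    (hnn : ∀ x y, 0 ≤ a x y)
    (hsupp : ∀ x y, 0 < a x y → isNbr x y)
    (hsum : ∀ x, ∑ i : Fin d, (a x (x + unitv d i) + a x (x - unitv d i)) = 1)
    (hbal : ∀ x i, a x (x + unitv d i) = a x (x - unitv d i))
    (hell : ∀ x y, isNbr x y → κ ≤ a x y)
    (E F bF : Finset (Fin d → ℤ))
    (hF : (↑F : Set (Fin d → ℤ)) = ↑E ∪ bdry (↑E))
    (hbF : (↑bF : Set (Fin d → ℤ)) = bdry (↑E))
    (hbne : bF.Nonempty)
    (u g : (Fin d → ℤ) → ℝ) (hgnn : ∀ x, 0 ≤ g x)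
    (hLa : ∀ x ∈ E, (contact (↑F) u x).Nonempty → -g x ≤ La a u x) :
    ∀ x ∈ E,
      u x ≤ (2 / κ) * (ellInfDiam F : ℝ) *
          (∑ z ∈ E, if (contact (↑F) u z).Nonempty then g z ^ d else 0) ^ ((1 : ℝ) / d)
        + bF.sup' hbne u := by
  classical
  intro x₀ hx₀
  haveI : Nonempty (Fin d) := ⟨⟨0, hd⟩⟩
  have hEF : ∀ z ∈ E, z ∈ F := by
    intro z hz
    have : (z : Fin d → ℤ) ∈ (↑F : Set (Fin d → ℤ)) := by
      rw [hF]; exact Or.inl (Finset.mem_coe.mpr hz)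
    exact Finset.mem_coe.mp this
  have hEne : E.Nonempty := ⟨x₀, hx₀⟩
  have hFne : F.Nonempty := ⟨x₀, hEF x₀ hx₀⟩
  set m := bF.sup' hbne u with hm
  set M := E.sup' hEne u with hM
  set S := ∑ z ∈ E, if (contact (↑F) u z).Nonempty then g z ^ d else 0 with hS
  have hS0 : 0 ≤ S := Finset.sum_nonneg fun z _ => by
    split
    · exact pow_nonneg (hgnn z) d
    · exact le_refl 0
  have hSr : 0 ≤ S ^ ((1:ℝ)/d) := Real.rpow_nonneg hS0 _
  set D := (ellInfDiam F : ℝ) with hD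
  have hD0 : (0:ℝ) ≤ D := Nat.cast_nonneg _
  have hux : u x₀ ≤ M := Finset.le_sup' u hx₀
  have hterm : 0 ≤ (2/κ) * D * S ^ ((1:ℝ)/d) := by positivity
  by_cases hMm : M ≤ m
  · linarith
  push_neg at hMm
  -- the diameter is at least 1
  have hD1 : (1:ℝ) ≤ D := by
    obtain ⟨b, hb⟩ := hbne
    have hbB : b ∈ bdry (↑E : Set (Fin d → ℤ)) := by
      rw [← hbF]; exact Finset.mem_coe.mpr hb
    obtain ⟨hbE, y, hyE, hyb⟩ := hbB
    have hyE' : y ∈ E := Finset.mem_coe.mp hyE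
    have hyF : y ∈ F := hEF y hyE'
    have hbF' : b ∈ F := by
      have : (b : Fin d → ℤ) ∈ (↑F : Set (Fin d → ℤ)) := by
        rw [hF]; exact Or.inr ⟨hbE, y, hyE, hyb⟩
      exact Finset.mem_coe.mp this
    have hne : y ≠ b := fun h => hbE (h ▸ hyE)
    obtain ⟨j, hj⟩ : ∃ j, y j ≠ b j := by
      by_contra h; push_neg at h; exact hne (funext h)
    have h1 : 1 ≤ (y j - b j).natAbs := by omega
    have h2 : (y j - b j).natAbs ≤ Finset.univ.sup fun k => (y k - b k).natAbs :=
      Finset.le_sup (f := fun k => (y k - b k).natAbs) (Finset.mem_univ j)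
    have h3 : (Finset.univ.sup fun k => (y k - b k).natAbs) ≤ ellInfDiam F := by
      unfold ellInfDiam
      exact Finset.le_sup (f := fun p : (Fin d → ℤ) × (Fin d → ℤ) => Finset.univ.sup fun j => (p.1 j - p.2 j).natAbs)
        (b := (y, b)) (Finset.mem_product.mpr ⟨hyF, hbF'⟩)
    have h4 : 1 ≤ ellInfDiam F := le_trans h1 (le_trans h2 h3)
    rw [hD]
    exact_mod_cast h4
  have hDpos : (0:ℝ) < D := lt_of_lt_of_le one_pos hD1
  set R := (M - m) / D with hRdef
  have hRpos : 0 < R := div_pos (by linarith) hDpos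
  have hdpos : (0:ℝ) < d := by exact_mod_cast Nat.lt_of_lt_of_le Nat.zero_lt_one hd
  set r := R / d with hrdef
  have hr : 0 < r := div_pos hRpos hdpos
  set E' := E.filter (fun z => (contact (↑F) u z).Nonempty) with hE'
  set B : (Fin d → ℤ) → Set (Fin d → ℝ) := fun z =>
    Set.pi Set.univ fun i => Set.Icc (u (z + unitv d i) - u z) (u z - u (z - unitv d i)) with hB
  have hnbrF : ∀ z ∈ E, ∀ w, isNbr z w → w ∈ F := by
    intro z hz w hw
    by_cases hwE : w ∈ E
    · exact hEF w hwE
    · have : (w : Fin d → ℤ) ∈ (↑F : Set (Fin d → ℤ)) := by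
        rw [hF]
        exact Or.inr ⟨fun h => hwE (Finset.mem_coe.mp h), z, Finset.mem_coe.mpr hz, hw⟩
      exact Finset.mem_coe.mp this
  -- covering claim
  have hcover : Set.pi Set.univ (fun _ : Fin d => Set.Ioo (-r) r) ⊆ ⋃ z ∈ E', B z := by
    intro s hs
    simp only [Set.mem_pi, Set.mem_univ, forall_true_left, Set.mem_Ioo] at hs
    obtain ⟨y, hyF, hy⟩ := F.exists_max_image (fun z => u z - ∑ j, s j * (z j : ℝ)) hFne
    have hcon : s ∈ contact (↑F) u y := fun z hz => hy z (Finset.mem_coe.mp hz)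
    have hyE : y ∈ E := by
      by_contra hyE
      have hybd : y ∈ bdry (↑E : Set (Fin d → ℤ)) := by
        have h := Finset.mem_coe.mpr hyF
        rw [hF] at h
        rcases h with h | h
        · exact absurd (Finset.mem_coe.mp h) hyE
        · exact h
      have hybF : y ∈ bF := by
        rw [← Finset.mem_coe, hbF]; exact hybd
      have hym : u y ≤ m := Finset.le_sup' u hybF
      obtain ⟨xM, hxM, hxMu⟩ := E.exists_mem_eq_sup' hEne u
      have hxMF : xM ∈ F := hEF xM hxM
      have h1 : u xM - ∑ j, s j * ((xM j : ℤ) : ℝ) ≤ u y - ∑ j, s j * ((y j : ℤ) : ℝ) :=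
        hy xM hxMF
      have hstrict : ∑ j, s j * (((xM j : ℤ) : ℝ) - ((y j : ℤ) : ℝ)) < M - m := by
        have hterm : ∀ j ∈ Finset.univ,
            s j * (((xM j : ℤ) : ℝ) - ((y j : ℤ) : ℝ)) < r * D := by
          intro j _
          have hd2 : |((xM j : ℤ) : ℝ) - ((y j : ℤ) : ℝ)| ≤ D := by
            have hle : (xM j - y j).natAbs ≤ ellInfDiam F := by
              refine le_trans (Finset.le_sup (f := fun k => (xM k - y k).natAbs)
                (Finset.mem_univ j)) ?_
              unfold ellInfDiam
              exact Finset.le_sup (f := fun p : (Fin d → ℤ) × (Fin d → ℤ) => Finset.univ.sup fun j => (p.1 j - p.2 j).natAbs)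
                (b := (xM, y)) (Finset.mem_product.mpr ⟨hxMF, hyF⟩)
            have heq : |((xM j : ℤ) : ℝ) - ((y j : ℤ) : ℝ)| = ((xM j - y j).natAbs : ℝ) := by
              rw [Nat.cast_natAbs]
              push_cast
              ring
            rw [heq, hD]
            exact_mod_cast hle
          have h3 : |s j| < r := abs_lt.mpr ⟨(hs j).1, (hs j).2⟩
          calc s j * (((xM j : ℤ) : ℝ) - ((y j : ℤ) : ℝ))
              ≤ |s j * (((xM j : ℤ) : ℝ) - ((y j : ℤ) : ℝ))| := le_abs_self _
            _ = |s j| * |((xM j : ℤ) : ℝ) - ((y j : ℤ) : ℝ)| := abs_mul _ _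
            _ ≤ |s j| * D := mul_le_mul_of_nonneg_left hd2 (abs_nonneg _)
            _ < r * D := mul_lt_mul_of_pos_right h3 hDpos
        calc ∑ j, s j * (((xM j : ℤ) : ℝ) - ((y j : ℤ) : ℝ))
            < ∑ _j : Fin d, r * D := Finset.sum_lt_sum_of_nonempty Finset.univ_nonempty hterm
          _ = d * (r * D) := by
              simp [Finset.sum_const, Finset.card_univ, nsmul_eq_mul]
          _ = R * D := by
              rw [hrdef]; field_simp
          _ = M - m := div_mul_cancel₀ _ (ne_of_gt hDpos)
      have hsplit : ∑ j, s j * (((xM j : ℤ) : ℝ) - ((y j : ℤ) : ℝ))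
          = (∑ j, s j * ((xM j : ℤ) : ℝ)) - ∑ j, s j * ((y j : ℤ) : ℝ) := by
        rw [← Finset.sum_sub_distrib]
        exact Finset.sum_congr rfl fun j _ => by ring
      have hMle : M ≤ u xM := le_of_eq hxMu
      linarith
    have hconne : (contact (↑F) u y).Nonempty := ⟨s, hcon⟩
    refine Set.mem_iUnion.mpr ⟨y, Set.mem_iUnion.mpr ⟨Finset.mem_filter.mpr ⟨hyE, hconne⟩, ?_⟩⟩
    simp only [hB, Set.mem_pi, Set.mem_univ, forall_true_left, Set.mem_Icc]
    intro i
    have hp1 := hcon (y + unitv d i)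
      (Finset.mem_coe.mpr (hnbrF y hyE _ (nbr_add y i)))
    have hm1 := hcon (y - unitv d i)
      (Finset.mem_coe.mpr (hnbrF y hyE _ (nbr_sub y i)))
    have ep1 := sum_slope_add s y i
    have em1 := sum_slope_sub s y i
    constructor
    · linarith
    · linarith
  -- per-box volume bound
  have hbox : ∀ z ∈ E', MeasureTheory.volume (B z) ≤ ENNReal.ofReal ((g z / (κ * d)) ^ d) := by
    intro z hz
    obtain ⟨hzE, hzc⟩ := Finset.mem_filter.mp hz
    obtain ⟨s₀, hs₀⟩ := hzc
    set ℓ : Fin d → ℝ := fun i => (u z - u (z - unitv d i)) - (u (z + unitv d i) - u z) with hℓ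
    have hℓnn : ∀ i, 0 ≤ ℓ i := by
      intro i
      have hp1 := hs₀ (z + unitv d i)
        (Finset.mem_coe.mpr (hnbrF z hzE _ (nbr_add z i)))
      have hm1 := hs₀ (z - unitv d i)
        (Finset.mem_coe.mpr (hnbrF z hzE _ (nbr_sub z i)))
      have ep1 := sum_slope_add s₀ z i
      have em1 := sum_slope_sub s₀ z i
      simp only [hℓ]
      linarith
    have hsum_a : ∑ i, a z (z + unitv d i) * ℓ i ≤ g z := by
      have hL := hLa z hzE ⟨s₀, hs₀⟩
      have hrw : La a u z = -∑ i, a z (z + unitv d i) * ℓ i := by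
        unfold La
        rw [← Finset.sum_neg_distrib]
        apply Finset.sum_congr rfl
        intro i _
        rw [← hbal z i]
        simp only [hℓ]
        ring
      rw [hrw] at hL
      linarith
    have hsumℓ : ∑ i, ℓ i ≤ g z / κ := by
      have hk : κ * ∑ i, ℓ i ≤ ∑ i, a z (z + unitv d i) * ℓ i := by
        rw [Finset.mul_sum]
        apply Finset.sum_le_sum
        intro i _
        exact mul_le_mul_of_nonneg_right (hell z _ (nbr_add z i)) (hℓnn i)
      rw [le_div_iff₀ hκ]
      nlinarith
    have hvol : MeasureTheory.volume (B z) = ENNReal.ofReal (∏ i, ℓ i) := by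
      simp only [hB]
      rw [MeasureTheory.volume_pi_pi]
      simp only [Real.volume_Icc]
      rw [← ENNReal.ofReal_prod_of_nonneg (fun i _ => hℓnn i)]
    rw [hvol]
    apply ENNReal.ofReal_le_ofReal
    calc ∏ i, ℓ i ≤ ((∑ i, ℓ i) / d) ^ d := prod_le_avg_pow hd ℓ hℓnn
      _ ≤ (g z / (κ * d)) ^ d := by
          have h0 : (0:ℝ) ≤ (∑ i, ℓ i) / d :=
            div_nonneg (Finset.sum_nonneg fun i _ => hℓnn i) hdpos.le
          have hsumκ : (∑ i, ℓ i) * κ ≤ g z := (le_div_iff₀ hκ).mp hsumℓ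
          apply pow_le_pow_left₀ h0
          rw [div_le_div_iff₀ hdpos (by positivity)]
          nlinarith [hdpos.le]
  -- volume of the cube
  have hcube : MeasureTheory.volume (Set.pi Set.univ (fun _ : Fin d => Set.Ioo (-r) r))
      = ENNReal.ofReal ((2 * r) ^ d) := by
    rw [MeasureTheory.volume_pi_pi]
    simp only [Real.volume_Ioo]
    rw [Finset.prod_const, Finset.card_univ, Fintype.card_fin,
      ← ENNReal.ofReal_pow (by linarith : (0:ℝ) ≤ r - -r)]
    congr 1
    ring
  -- measure comparison
  have hmeas : ENNReal.ofReal ((2 * r) ^ d) ≤ ENNReal.ofReal (∑ z ∈ E', (g z / (κ * d)) ^ d) := by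
    rw [← hcube]
    calc MeasureTheory.volume (Set.pi Set.univ (fun _ : Fin d => Set.Ioo (-r) r))
        ≤ MeasureTheory.volume (⋃ z ∈ E', B z) := MeasureTheory.measure_mono hcover
      _ ≤ ∑ z ∈ E', MeasureTheory.volume (B z) := MeasureTheory.measure_biUnion_finset_le _ _
      _ ≤ ∑ z ∈ E', ENNReal.ofReal ((g z / (κ * d)) ^ d) := Finset.sum_le_sum hbox
      _ = ENNReal.ofReal (∑ z ∈ E', (g z / (κ * d)) ^ d) :=
          (ENNReal.ofReal_sum_of_nonneg fun z _ =>
            pow_nonneg (div_nonneg (hgnn z) (by positivity)) d).symm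
  have hreal : (2 * r) ^ d ≤ ∑ z ∈ E', (g z / (κ * d)) ^ d :=
    (ENNReal.ofReal_le_ofReal_iff (Finset.sum_nonneg fun z _ =>
      pow_nonneg (div_nonneg (hgnn z) (by positivity)) d)).mp hmeas
  have hsumS : ∑ z ∈ E', (g z / (κ * d)) ^ d = S / (κ * d) ^ d := by
    rw [hE', Finset.sum_filter, hS, Finset.sum_div]
    apply Finset.sum_congr rfl
    intro z _
    split
    · rw [div_pow]
    · rw [zero_div]
  have hκd : (0:ℝ) < (κ * d) ^ d := by positivity
  have hpow : (2 * r * (κ * d)) ^ d ≤ S := by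
    rw [hsumS] at hreal
    rw [mul_pow]
    calc (2 * r) ^ d * (κ * d) ^ d ≤ S / (κ * d) ^ d * (κ * d) ^ d :=
        mul_le_mul_of_nonneg_right hreal (le_of_lt hκd)
      _ = S := div_mul_cancel₀ _ (ne_of_gt hκd)
  have hroot : 2 * r * (κ * d) ≤ S ^ ((1:ℝ)/d) := by
    have h0 : (0:ℝ) ≤ 2 * r * (κ * d) := by positivity
    have h1 := Real.rpow_le_rpow (by positivity) hpow (by positivity : (0:ℝ) ≤ 1/d)
    rwa [← Real.rpow_natCast (2 * r * (κ * d)) d, ← Real.rpow_mul h0,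
      mul_one_div, div_self (ne_of_gt hdpos), Real.rpow_one] at h1
  have h2Rκ : 2 * R * κ ≤ S ^ ((1:ℝ)/d) := by
    have heq : 2 * r * (κ * d) = 2 * R * κ := by
      rw [hrdef]; field_simp
    linarith
  have hRD : M - m = R * D := (div_mul_cancel₀ _ (ne_of_gt hDpos)).symm
  have hfin : M - m ≤ (2/κ) * D * S ^ ((1:ℝ)/d) := by
    have h1 : (2/κ) * D * (2 * R * κ) ≤ (2/κ) * D * S ^ ((1:ℝ)/d) :=
      mul_le_mul_of_nonneg_left h2Rκ (by positivity)
    have h2 : (2/κ) * D * (2 * R * κ) = 4 * (R * D) := by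
      field_simp; ring
    nlinarith [mul_nonneg (le_of_lt hRpos) hD0]
  linarith
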